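/- Let S be an admissible additive subsemigroup of ℤ^n × ℤ containing at least one element (α, k) with k ≥ 1. Then Δ(S) is compact if and only if S is strongly admissible, i.e. if and only if C(S) ∩ (ℝ^n × {0}) = {(0,0)}. -/
import Mathlib


open Set

noncomputable section

/-- The embedding of the lattice `ℤ^n × ℤ` into `ℝ^n × ℝ`. -/
def latticeEmbed {n : ℕ} (x : (Fin n → ℤ) × ℤ) : (Fin n → ℝ) × ℝ :=
  (fun i => (x.1 i : ℝ), (x.2 : ℝ))

/-- The set of all finite nonnegative linear combinations of elements of `T`. -/
def coneCombos {E : Type*} [AddCommMonoid E] [Module ℝ E] (T : Set E) : Set E :=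
  {x | ∃ (k : ℕ) (c : Fin k → ℝ) (t : Fin k → E),
    (∀ i, 0 ≤ c i) ∧ (∀ i, t i ∈ T) ∧ x = ∑ i, c i • t i}

/-- `C(T)`: the closed convex cone generated by `T`. -/
def closedConeHull {E : Type*} [AddCommMonoid E] [Module ℝ E] [TopologicalSpace E]
    (T : Set E) : Set E :=
  closure (coneCombos T)

/-- The closed convex cone `C(S) ⊆ ℝ^{n+1}` generated by a subset `S ⊆ ℤ^n × ℤ`. -/
def coneOf {n : ℕ} (S : Set ((Fin n → ℤ) × ℤ)) : Set ((Fin n → ℝ) × ℝ) :=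
  closedConeHull (latticeEmbed '' S)

/-- The Okounkov convex set `Δ(S) = π(C(S) ∩ (ℝ^n × {1}))`. -/
def okounkovSet {n : ℕ} (S : Set ((Fin n → ℤ) × ℤ)) : Set (Fin n → ℝ) :=
  Prod.fst '' (coneOf S ∩ {x | x.2 = 1})

/-- `S^k = {α ∈ ℝ^n : kα ∈ ℤ^n and (kα, k) ∈ S}`. -/
def Spow {n : ℕ} (S : Set ((Fin n → ℤ) × ℤ)) (k : ℕ) : Set (Fin n → ℝ) :=
  {α | ∃ β : Fin n → ℤ, (∀ i, (β i : ℝ) = (k : ℝ) * α i) ∧ (β, (k : ℤ)) ∈ S}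

section Aux

variable {E : Type*} [AddCommMonoid E] [Module ℝ E]

lemma zero_mem_coneCombos (T : Set E) : (0 : E) ∈ coneCombos T :=
  ⟨0, Fin.elim0, Fin.elim0, fun i => i.elim0, fun i => i.elim0, by simp⟩

lemma add_mem_coneCombos {T : Set E} {x y : E}
    (hx : x ∈ coneCombos T) (hy : y ∈ coneCombos T) : x + y ∈ coneCombos T := by
  obtain ⟨k, c, t, hc, ht, rfl⟩ := hx
  obtain ⟨l, d, s, hd, hs, rfl⟩ := hy
  refine ⟨k + l, Fin.append c d, Fin.append t s, ?_, ?_, ?_⟩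
  · intro i
    refine Fin.addCases (fun j => ?_) (fun j => ?_) i
    · simpa [Fin.append_left] using hc j
    · simpa [Fin.append_right] using hd j
  · intro i
    refine Fin.addCases (fun j => ?_) (fun j => ?_) i
    · simpa [Fin.append_left] using ht j
    · simpa [Fin.append_right] using hs j
  · rw [Fin.sum_univ_add]
    simp [Fin.append_left, Fin.append_right]

lemma smul_mem_coneCombos {T : Set E} {x : E} {r : ℝ} (hr : 0 ≤ r)
    (hx : x ∈ coneCombos T) : r • x ∈ coneCombos T := by
  obtain ⟨k, c, t, hc, ht, rfl⟩ := hx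
  exact ⟨k, fun i => r * c i, t, fun i => mul_nonneg hr (hc i), ht,
    by rw [Finset.smul_sum]; simp [smul_smul]⟩

variable [TopologicalSpace E]

lemma add_mem_closedConeHull [ContinuousAdd E] {T : Set E} {x y : E}
    (hx : x ∈ closedConeHull T) (hy : y ∈ closedConeHull T) :
    x + y ∈ closedConeHull T :=
  map_mem_closure₂ continuous_add hx hy fun _ ha _ hb => add_mem_coneCombos ha hb

lemma smul_mem_closedConeHull [ContinuousSMul ℝ E] {T : Set E} {x : E} {r : ℝ}
    (hr : 0 ≤ r) (hx : x ∈ closedConeHull T) : r • x ∈ closedConeHull T :=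
  map_mem_closure (continuous_const_smul r) hx fun _ ha => smul_mem_coneCombos hr ha

end Aux

theorem isCompact_okounkovSet_iff_stronglyAdmissible (n : ℕ) (hn : 1 ≤ n)
    (S : Set ((Fin n → ℤ) × ℤ))
    (hsemi : ∀ a ∈ S, ∀ b ∈ S, a + b ∈ S)
    (hadm : ∀ a ∈ S, 0 ≤ a.2)
    (hpos : ∃ a ∈ S, 1 ≤ a.2) :
    IsCompact (okounkovSet S) ↔ coneOf S ∩ {x | x.2 = 0} = {0} := by
  constructor
  · intro hcpt
    refine Set.eq_singleton_iff_unique_mem.mpr ⟨⟨subset_closure (zero_mem_coneCombos _), rfl⟩, ?_⟩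
    rintro x ⟨hxC, hx2⟩
    simp only [Set.mem_setOf_eq] at hx2
    obtain ⟨a, haS, hak⟩ := hpos
    have hk : (0:ℝ) < (a.2 : ℝ) := by exact_mod_cast lt_of_lt_of_le one_pos hak
    have hs0 : latticeEmbed a ∈ coneOf S :=
      subset_closure ⟨1, fun _ => 1, fun _ => latticeEmbed a, fun _ => zero_le_one,
        fun _ => ⟨a, haS, rfl⟩, by simp⟩
    set w : (Fin n → ℝ) × ℝ := ((a.2 : ℝ))⁻¹ • latticeEmbed a with hw
    have hwC : w ∈ coneOf S := smul_mem_closedConeHull (inv_nonneg.mpr hk.le) hs0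
    have hw2 : w.2 = 1 := by
      simp [hw, latticeEmbed, inv_mul_cancel₀ hk.ne']
    have hmem : ∀ t : ℝ, 0 ≤ t → t • x.1 + w.1 ∈ okounkovSet S := by
      intro t ht
      refine ⟨t • x + w, ⟨add_mem_closedConeHull (smul_mem_closedConeHull ht hxC) hwC, ?_⟩, rfl⟩
      show (t • x + w).2 = 1
      simp [hx2, hw2]
    obtain ⟨R, hR⟩ := (Bornology.IsBounded.exists_norm_le) hcpt.isBounded
    have hx1 : x.1 = 0 := by
      by_contra h1
      have hxn : 0 < ‖x.1‖ := norm_pos_iff.mpr h1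
      set t : ℝ := (|R| + ‖w.1‖ + 1) / ‖x.1‖ with htdef
      have ht0 : 0 ≤ t := by positivity
      have h2 : ‖t • x.1 + w.1‖ ≤ R := hR _ (hmem t ht0)
      have h3 : ‖t • x.1‖ ≤ ‖t • x.1 + w.1‖ + ‖w.1‖ := norm_le_add_norm_add _ _
      have h4 : ‖t • x.1‖ = |R| + ‖w.1‖ + 1 := by
        rw [norm_smul, Real.norm_of_nonneg ht0, htdef, div_mul_cancel₀ _ hxn.ne']
      have h5 : R ≤ |R| := le_abs_self R
      linarith
    exact Prod.ext hx1 hx2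
  · intro h
    have hKclosed : IsClosed (coneOf S ∩ {x : (Fin n → ℝ) × ℝ | x.2 = 1}) :=
      isClosed_closure.inter (isClosed_eq continuous_snd continuous_const)
    have hKb : Bornology.IsBounded (coneOf S ∩ {x : (Fin n → ℝ) × ℝ | x.2 = 1}) := by
      by_contra hb
      rw [isBounded_iff_forall_norm_le] at hb
      push_neg at hb
      have hu : ∀ m : ℕ, ∃ x ∈ coneOf S ∩ {x : (Fin n → ℝ) × ℝ | x.2 = 1}, (m:ℝ) < ‖x‖ :=
        fun m => hb m
      choose u huK hun using hu
      have hupos : ∀ m, 0 < ‖u m‖ := fun m => lt_of_le_of_lt (Nat.cast_nonneg m) (hun m)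
      set v : ℕ → (Fin n → ℝ) × ℝ := fun m => ‖u m‖⁻¹ • u m with hvdef
      have hv : ∀ m, v m ∈ Metric.sphere (0 : (Fin n → ℝ) × ℝ) 1 := by
        intro m
        rw [mem_sphere_zero_iff_norm, hvdef, norm_smul, norm_inv, norm_norm,
          inv_mul_cancel₀ (hupos m).ne']
      have hvC : ∀ m, v m ∈ coneOf S := fun m =>
        smul_mem_closedConeHull (inv_nonneg.mpr (hupos m).le) (huK m).1
      obtain ⟨y, hy, φ, hφ, hlim⟩ := (isCompact_sphere (0 : (Fin n → ℝ) × ℝ) 1).tendsto_subseq hv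
      have hyC : y ∈ coneOf S :=
        isClosed_closure.mem_of_tendsto hlim (Filter.Eventually.of_forall fun m => hvC (φ m))
      have hy2 : y.2 = 0 := by
        have h1 : Filter.Tendsto (fun m => (v (φ m)).2) Filter.atTop (nhds y.2) :=
          (continuous_snd.tendsto y).comp hlim
        have htop : Filter.Tendsto (fun m => ‖u (φ m)‖) Filter.atTop Filter.atTop := by
          refine Filter.tendsto_atTop_mono (fun m => ?_) tendsto_natCast_atTop_atTop
          calc (m : ℝ) ≤ (φ m : ℝ) := by exact_mod_cast hφ.le_apply
            _ ≤ ‖u (φ m)‖ := (hun (φ m)).le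
        have h2 : Filter.Tendsto (fun m => (v (φ m)).2) Filter.atTop (nhds 0) := by
          have heq : ∀ m, (v (φ m)).2 = ‖u (φ m)‖⁻¹ := by
            intro m
            have : (u (φ m)).2 = 1 := (huK (φ m)).2
            simp [hvdef, this]
          simp only [heq]
          exact tendsto_inv_atTop_zero.comp htop
        exact tendsto_nhds_unique h1 h2
      have : y ∈ ({0} : Set ((Fin n → ℝ) × ℝ)) := h ▸ ⟨hyC, hy2⟩
      rw [Set.mem_singleton_iff] at this
      rw [mem_sphere_zero_iff_norm, this] at hy
      simp at hy
    have hK : IsCompact (coneOf S ∩ {x : (Fin n → ℝ) × ℝ | x.2 = 1}) :=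
      Metric.isCompact_of_isClosed_isBounded hKclosed hKb
    exact hK.image continuous_fst
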